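/- For any k ≥ 1 and real numbers δ' > δ > 0, there exists ℓ ≥ 1 such that every *(k,δ)-stable function f : V × W → [0,1] (for any sets V, W) is (ℓ,δ')-stable. -/

import Mathlib

lemma greedy_lemma {α κ : Type} [LinearOrder α] [Fintype κ] [DecidableEq κ]
    (C : α → α → κ) (hc : 2 ≤ Fintype.card κ) :
    ∀ (t : ℕ) (S : Finset α), Fintype.card κ ^ t ≤ S.card →
    ∃ x : Fin t → α, StrictMono x ∧ (∀ i, x i ∈ S) ∧ ∃ g : Fin t → κ,
      ∀ i j : Fin t, i < j → C (x i) (x j) = g i := by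
  intro t
  induction t with
  | zero =>
      intro S _
      exact ⟨Fin.elim0, fun i => i.elim0, fun i => i.elim0, Fin.elim0, fun i => i.elim0⟩
  | succ t ih =>
      intro S hS
      set c := Fintype.card κ with hcdef
      have hcpow : 0 < c ^ (t+1) := by positivity
      have hSne : S.Nonempty := Finset.card_pos.mp (lt_of_lt_of_le hcpow hS)
      set x0 := S.min' hSne with hx0
      set T := S.erase x0 with hT
      have hTcard : T.card = S.card - 1 := Finset.card_erase_of_mem (S.min'_mem hSne)
      have hpow : c ^ (t+1) = c * c ^ t := pow_succ' c t
      have hmul : (Finset.univ : Finset κ).card * (c ^ t - 1) < T.card := by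
        have h1 : (Finset.univ : Finset κ).card = c := Finset.card_univ
        have h2 : 0 < c ^ t := by positivity
        rw [h1, hTcard]
        have h3 : c * (c ^ t - 1) = c * c ^ t - c := by rw [Nat.mul_sub, mul_one]
        have h4 : c ≤ c * c ^ t := Nat.le_mul_of_pos_right c h2
        omega
      obtain ⟨γ, _, hγ⟩ := Finset.exists_lt_card_fiber_of_mul_lt_card_of_maps_to
        (f := fun y => C x0 y) (fun a _ => Finset.mem_univ _) hmul
      set F := T.filter (fun y => C x0 y = γ) with hF
      have hFcard : c ^ t ≤ F.card := by omega
      obtain ⟨x', hx'mono, hx'mem, g', hg'⟩ := ih F hFcard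
      have hx'S : ∀ i, x' i ∈ S := fun i =>
        Finset.mem_of_mem_erase (Finset.mem_of_mem_filter _ (hx'mem i))
      have hx'gt : ∀ i, x0 < x' i := fun i => by
        have h1 := hx'mem i
        rw [hF, Finset.mem_filter] at h1
        have h2 := h1.1
        rw [hT, Finset.mem_erase] at h2
        exact lt_of_le_of_ne (S.min'_le _ h2.2) (fun h => h2.1 h.symm)
      have hx'col : ∀ i, C x0 (x' i) = γ := fun i => by
        have h1 := hx'mem i
        rw [hF, Finset.mem_filter] at h1
        exact h1.2
      refine ⟨Fin.cons x0 x', ?_, ?_, Fin.cons γ g', ?_⟩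
      · intro i j hij
        rcases Fin.eq_zero_or_eq_succ j with rfl | ⟨j', rfl⟩
        · exact absurd hij (by simp)
        rcases Fin.eq_zero_or_eq_succ i with rfl | ⟨i', rfl⟩
        · simpa using hx'gt j'
        · simp only [Fin.cons_succ]
          exact hx'mono (by exact_mod_cast Fin.succ_lt_succ_iff.mp hij)
      · intro i
        rcases Fin.eq_zero_or_eq_succ i with rfl | ⟨i', rfl⟩
        · simpa using S.min'_mem hSne
        · simpa using hx'S i'
      · intro i j hij
        rcases Fin.eq_zero_or_eq_succ j with rfl | ⟨j', rfl⟩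
        · exact absurd hij (by simp)
        rcases Fin.eq_zero_or_eq_succ i with rfl | ⟨i', rfl⟩
        · simpa using hx'col j'
        · simp only [Fin.cons_succ]
          exact hg' i' j' (Fin.succ_lt_succ_iff.mp hij)

lemma ramsey_pairs {κ : Type} [Fintype κ] [DecidableEq κ]
    (hc : 2 ≤ Fintype.card κ) (s : ℕ) (hs : 1 ≤ s) :
    ∃ N : ℕ, 1 ≤ N ∧ ∀ (C : Fin N → Fin N → κ),
      ∃ (y : Fin s → Fin N) (γ : κ), StrictMono y ∧
        ∀ p q : Fin s, p < q → C (y p) (y q) = γ := by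
  classical
  set c := Fintype.card κ with hcdef
  refine ⟨c ^ (c * s), Nat.one_le_pow _ _ (by omega), ?_⟩
  intro C
  obtain ⟨x, hxmono, hxmem, g, hg⟩ := greedy_lemma C hc (c * s)
    (Finset.univ : Finset (Fin (c ^ (c * s))))
    (by simp [hcdef])
  -- pigeonhole on g
  have hmul : (Finset.univ : Finset κ).card * (s - 1) < (Finset.univ : Finset (Fin (c * s))).card := by
    have hc0 : 0 < c := by omega
    simp only [Finset.card_univ, Fintype.card_fin, ← hcdef]
    have : c * (s - 1) = c * s - c := by rw [Nat.mul_sub, mul_one]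
    have h4 : c ≤ c * s := Nat.le_mul_of_pos_right c hs
    omega
  obtain ⟨γ, _, hγ⟩ := Finset.exists_lt_card_fiber_of_mul_lt_card_of_maps_to
    (f := g) (fun a _ => Finset.mem_univ _) hmul
  set F := Finset.univ.filter (fun i => g i = γ) with hF
  have hFle : s ≤ F.card := by omega
  obtain ⟨F', hF'sub, hF'card⟩ := Finset.exists_subset_card_eq hFle
  set e := F'.orderEmbOfFin hF'card with he
  refine ⟨fun p => x (e p), γ, ?_, ?_⟩
  · exact fun p q hpq => hxmono (e.strictMono hpq)
  · intro p q hpq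
    have hmem : e p ∈ F := hF'sub (F'.orderEmbOfFin_mem hF'card p)
    rw [hF, Finset.mem_filter] at hmem
    rw [hg (e p) (e q) (e.strictMono hpq), hmem.2]

lemma idx_bounds (m : ℕ) (hm : 1 ≤ m) (v : ℝ) (hv0 : 0 ≤ v) (hv1 : v ≤ 1)
    (t : ℕ) (ht : min ⌊v * m⌋₊ (m - 1) = t) :
    (t : ℝ) ≤ v * m ∧ v * m ≤ (t : ℝ) + 1 := by
  have hm0 : (0:ℝ) < m := by exact_mod_cast hm
  constructor
  · have h1 : t ≤ ⌊v * m⌋₊ := ht ▸ min_le_left _ _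
    calc (t : ℝ) ≤ (⌊v * m⌋₊ : ℝ) := by exact_mod_cast h1
      _ ≤ v * m := Nat.floor_le (by positivity)
  · rcases le_or_gt ⌊v * m⌋₊ (m - 1) with h | h
    · have h1 : t = ⌊v * m⌋₊ := by omega
      have h2 : v * m < ⌊v * m⌋₊ + 1 := Nat.lt_floor_add_one _
      rw [h1]
      linarith
    · have h1 : t = m - 1 := by omega
      have h2 : (t : ℝ) + 1 = m := by
        rw [h1]
        have : m - 1 + 1 = m := by omega
        exact_mod_cast congrArg (Nat.cast (R := ℝ)) this
      rw [h2]
      nlinarith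

/-- For any `k ≥ 1` and `δ' > δ > 0` there is `ℓ ≥ 1` such that every `*(k,δ)`-stable
`[0,1]`-valued function is `(ℓ,δ')`-stable. -/
theorem star_stable_implies_stable (k : ℕ) (hk : 1 ≤ k) (δ δ' : ℝ)
    (hδ : 0 < δ) (hδ' : δ < δ') :
    ∃ ℓ : ℕ, 1 ≤ ℓ ∧ ∀ (V W : Type) (f : V → W → ℝ),
      (∀ a b, f a b ∈ Set.Icc (0:ℝ) 1) →
      (¬ ∃ (a : Fin k → V) (b : Fin k → W) (r : ℝ), r ∈ Set.Icc (0:ℝ) 1 ∧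
        ∀ i j : Fin k, (i ≤ j → r + δ ≤ f (a i) (b j)) ∧ (j < i → f (a i) (b j) ≤ r)) →
      ¬ ∃ (a : Fin ℓ → V) (b : Fin ℓ → W), ∀ i j : Fin ℓ, i < j →
        δ' ≤ |f (a i) (b j) - f (a j) (b i)| := by
  classical
  set m := ⌈(δ' - δ)⁻¹⌉₊ with hmdef
  have hδδ : (0:ℝ) < δ' - δ := by linarith
  have hm1 : 1 ≤ m := by
    have : 0 < m := Nat.ceil_pos.mpr (by positivity)
    omega
  have hmR : (0:ℝ) < m := by exact_mod_cast hm1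
  have hinv : 1 / (m:ℝ) ≤ δ' - δ := by
    rw [div_le_iff₀ hmR]
    have h2 : (δ' - δ)⁻¹ ≤ (m:ℝ) := Nat.le_ceil _
    calc (1:ℝ) = (δ' - δ) * (δ' - δ)⁻¹ := (mul_inv_cancel₀ hδδ.ne').symm
      _ ≤ (δ' - δ) * m := mul_le_mul_of_nonneg_left h2 hδδ.le
  have hcard : 2 ≤ Fintype.card (Bool × Fin m) := by
    have : Fintype.card (Bool × Fin m) = 2 * m := by simp
    omega
  obtain ⟨N, hN1, hN⟩ := ramsey_pairs hcard (2 * k) (by omega)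
  refine ⟨N, hN1, ?_⟩
  intro V W f hf hstar
  rintro ⟨a, b, hab⟩
  set C : Fin N → Fin N → Bool × Fin m := fun i j =>
    (if f (a j) (b i) ≤ f (a i) (b j) then true else false,
     ⟨min ⌊(min (f (a i) (b j)) (f (a j) (b i))) * m⌋₊ (m - 1), by omega⟩) with hC
  obtain ⟨y, ⟨β, t⟩, hymono, hycol⟩ := hN C
  have hbit : ∀ p q : Fin (2 * k), p < q →
      (if f (a (y q)) (b (y p)) ≤ f (a (y p)) (b (y q)) then true else false) = β := by
    intro p q hpq
    have h := hycol p q hpq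
    simp only [hC, Prod.mk.injEq] at h
    exact h.1
  have hidx : ∀ p q : Fin (2 * k), p < q →
      min ⌊(min (f (a (y p)) (b (y q))) (f (a (y q)) (b (y p)))) * m⌋₊ (m - 1) = t.val := by
    intro p q hpq
    have h := hycol p q hpq
    simp only [hC, Prod.mk.injEq] at h
    exact congrArg Fin.val h.2
  set r : ℝ := ((t.val : ℝ) + 1) / m with hr
  have hr0 : (0:ℝ) ≤ r := by positivity
  have hr1 : r ≤ 1 := by
    rw [hr, div_le_one hmR]
    have : t.val + 1 ≤ m := by have := t.isLt; omega
    exact_mod_cast this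
  have habs : ∀ p q : Fin (2 * k), p < q →
      δ' ≤ |f (a (y p)) (b (y q)) - f (a (y q)) (b (y p))| :=
    fun p q hpq => hab (y p) (y q) (hymono hpq)
  cases β with
  | true =>
      have key : ∀ p q : Fin (2 * k), p < q →
          (r + δ ≤ f (a (y p)) (b (y q))) ∧ f (a (y q)) (b (y p)) ≤ r := by
        intro p q hpq
        have hle : f (a (y q)) (b (y p)) ≤ f (a (y p)) (b (y q)) := by
          by_contra hcon
          have := hbit p q hpq
          simp [if_neg hcon] at this
        have hd : δ' ≤ f (a (y p)) (b (y q)) - f (a (y q)) (b (y p)) := by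
          have h := habs p q hpq
          rwa [abs_of_nonneg (by linarith)] at h
        have hmin := hidx p q hpq
        rw [min_eq_right hle] at hmin
        have hv0 := (hf (a (y q)) (b (y p))).1
        have hv1 := (hf (a (y q)) (b (y p))).2
        obtain ⟨hlo, hhi⟩ := idx_bounds m hm1 _ hv0 hv1 t.val hmin
        have h5 : (t.val : ℝ)/m ≤ f (a (y q)) (b (y p)) := by
          rw [div_le_iff₀ hmR]; exact hlo
        have h6 : f (a (y q)) (b (y p)) ≤ ((t.val : ℝ) + 1)/m := by
          rw [le_div_iff₀ hmR]; exact hhi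
        have h7 : r = (t.val : ℝ)/m + 1/m := by rw [hr]; ring
        constructor
        · rw [h7]; linarith
        · rw [hr]; exact h6
      exact hstar ⟨fun i => a (y ⟨2 * i.val, by have := i.isLt; omega⟩),
        fun j => b (y ⟨2 * j.val + 1, by have := j.isLt; omega⟩), r, ⟨hr0, hr1⟩,
        fun i j => ⟨
          fun hij => (key ⟨2 * i.val, by have := i.isLt; omega⟩
            ⟨2 * j.val + 1, by have := j.isLt; omega⟩
            (Fin.mk_lt_mk.mpr (by have := Fin.le_def.mp hij; omega))).1,
          fun hij => (key ⟨2 * j.val + 1, by have := j.isLt; omega⟩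
            ⟨2 * i.val, by have := i.isLt; omega⟩
            (Fin.mk_lt_mk.mpr (by have := Fin.lt_def.mp hij; omega))).2⟩⟩
  | false =>
      have key : ∀ p q : Fin (2 * k), p < q →
          (r + δ ≤ f (a (y q)) (b (y p))) ∧ f (a (y p)) (b (y q)) ≤ r := by
        intro p q hpq
        have hlt : f (a (y p)) (b (y q)) < f (a (y q)) (b (y p)) := by
          by_contra hcon
          push_neg at hcon
          have := hbit p q hpq
          simp [if_pos hcon] at this
        have hd : δ' ≤ f (a (y q)) (b (y p)) - f (a (y p)) (b (y q)) := by
          have h := habs p q hpq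
          rwa [abs_sub_comm, abs_of_nonneg (by linarith)] at h
        have hmin := hidx p q hpq
        rw [min_eq_left hlt.le] at hmin
        have hv0 := (hf (a (y p)) (b (y q))).1
        have hv1 := (hf (a (y p)) (b (y q))).2
        obtain ⟨hlo, hhi⟩ := idx_bounds m hm1 _ hv0 hv1 t.val hmin
        have h5 : (t.val : ℝ)/m ≤ f (a (y p)) (b (y q)) := by
          rw [div_le_iff₀ hmR]; exact hlo
        have h6 : f (a (y p)) (b (y q)) ≤ ((t.val : ℝ) + 1)/m := by
          rw [le_div_iff₀ hmR]; exact hhi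
        have h7 : r = (t.val : ℝ)/m + 1/m := by rw [hr]; ring
        constructor
        · rw [h7]; linarith
        · rw [hr]; exact h6
      exact hstar ⟨fun i => a (y ⟨2 * (k - 1 - i.val) + 1, by have := i.isLt; omega⟩),
        fun j => b (y ⟨2 * (k - 1 - j.val), by have := j.isLt; omega⟩), r, ⟨hr0, hr1⟩,
        fun i j => ⟨
          fun hij => (key ⟨2 * (k - 1 - j.val), by have := j.isLt; omega⟩
            ⟨2 * (k - 1 - i.val) + 1, by have := i.isLt; omega⟩
            (Fin.mk_lt_mk.mpr (by
              have h1 := Fin.le_def.mp hij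
              have h2 := i.isLt
              have h3 := j.isLt
              omega))).1,
          fun hij => (key ⟨2 * (k - 1 - i.val) + 1, by have := i.isLt; omega⟩
            ⟨2 * (k - 1 - j.val), by have := j.isLt; omega⟩
            (Fin.mk_lt_mk.mpr (by
              have h1 := Fin.lt_def.mp hij
              have h2 := i.isLt
              have h3 := j.isLt
              omega))).2⟩⟩
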